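/- An analytic map H : ℝⁿ → ℝⁿ is a diffeomorphism (bijective with differentiable inverse) if and only if det J_H(X) ≠ 0 for all X ∈ ℝⁿ and H is proper. -/

import Mathlib

open Function Set Metric Topology

variable {n : ℕ}

private theorem had_matrix_eq (L : (Fin n → ℝ) →L[ℝ] (Fin n → ℝ)) :
    (Matrix.of fun j k => L (Pi.single k 1) j) = LinearMap.toMatrix' (L : (Fin n → ℝ) →ₗ[ℝ] (Fin n → ℝ)) := by
  ext i j
  rw [LinearMap.toMatrix'_apply]
  have : (fun j' => if j' = j then (1:ℝ) else 0) = (Pi.single j 1 : Fin n → ℝ) := by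
    ext k; simp [Pi.single_apply]
  rfl

/-- chart lemma -/
private theorem had_chart {H : (Fin n → ℝ) → (Fin n → ℝ)}
    (hH : ∀ x, AnalyticAt ℝ H x)
    (hdet : ∀ X : Fin n → ℝ,
        (Matrix.of fun j k => fderiv ℝ H X (Pi.single k 1) j).det ≠ 0)
    (a : Fin n → ℝ) :
    ∃ e : OpenPartialHomeomorph (Fin n → ℝ) (Fin n → ℝ), a ∈ e.source ∧
      (∀ x ∈ e.source, e x = H x) ∧ DifferentiableAt ℝ e.symm (H a) := by
  have hst : HasStrictFDerivAt H (fderiv ℝ H a) a :=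
    (hH a).contDiffAt.hasStrictFDerivAt (n := 1) one_ne_zero
  have hu : IsUnit (LinearMap.toMatrix (Pi.basisFun ℝ (Fin n)) (Pi.basisFun ℝ (Fin n))
      ((fderiv ℝ H a) : (Fin n → ℝ) →ₗ[ℝ] (Fin n → ℝ))).det := by
    rw [LinearMap.toMatrix_eq_toMatrix']
    rw [isUnit_iff_ne_zero]
    rw [← had_matrix_eq]
    exact hdet a
  let φ₀ := LinearEquiv.ofIsUnitDet hu
  let φ := φ₀.toContinuousLinearEquiv
  have hφ : (φ : (Fin n → ℝ) →L[ℝ] (Fin n → ℝ)) = fderiv ℝ H a := by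
    apply ContinuousLinearMap.coe_injective
    ext v
    simp [φ, φ₀, LinearEquiv.coe_ofIsUnitDet]
  have hst' : HasStrictFDerivAt H (φ : (Fin n → ℝ) →L[ℝ] (Fin n → ℝ)) a := hφ ▸ hst
  refine ⟨hst'.toOpenPartialHomeomorph H, hst'.mem_toOpenPartialHomeomorph_source, ?_, ?_⟩
  · intro x _
    rw [hst'.toOpenPartialHomeomorph_coe]
  · exact hst'.to_localInverse.differentiableAt

private theorem had_locInj {H : (Fin n → ℝ) → (Fin n → ℝ)}
    (hH : ∀ x, AnalyticAt ℝ H x)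
    (hdet : ∀ X : Fin n → ℝ,
        (Matrix.of fun j k => fderiv ℝ H X (Pi.single k 1) j).det ≠ 0) :
    IsLocallyInjective H := by
  intro x
  obtain ⟨e, hx, heq, -⟩ := had_chart hH hdet x
  exact ⟨e.source, e.open_source, hx, fun a ha b hb hab =>
    e.injOn ha hb (by rw [heq a ha, heq b hb, hab])⟩

theorem hadamard_forward {H : (Fin n → ℝ) → (Fin n → ℝ)}
    (hH : ∀ x, AnalyticAt ℝ H x) (hbij : Function.Bijective H)
    (hdiff : Differentiable ℝ (Function.invFun H)) :
    ((∀ X : Fin n → ℝ,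
        (Matrix.of fun j k => fderiv ℝ H X (Pi.single k 1) j).det ≠ 0) ∧
      ∀ C : Set (Fin n → ℝ), IsCompact C → IsCompact (H ⁻¹' C)) := by
  constructor
  · intro X
    have hdH : DifferentiableAt ℝ H X := (hH X).differentiableAt
    have hinv : Function.invFun H ∘ H = id := funext (Function.leftInverse_invFun hbij.1)
    have hc : fderiv ℝ (Function.invFun H ∘ H) X =
        (fderiv ℝ (Function.invFun H) (H X)).comp (fderiv ℝ H X) :=
      fderiv_comp X (hdiff _) hdH
    rw [hinv, fderiv_id] at hc
    have hdet := congrArg (fun L : (Fin n → ℝ) →L[ℝ] (Fin n → ℝ) =>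
      (LinearMap.toMatrix' (L : (Fin n → ℝ) →ₗ[ℝ] (Fin n → ℝ))).det) hc
    simp only [ContinuousLinearMap.coe_comp, LinearMap.toMatrix'_comp, Matrix.det_mul,
      ContinuousLinearMap.coe_id, LinearMap.toMatrix'_id, Matrix.det_one] at hdet
    intro h0
    rw [had_matrix_eq (fderiv ℝ H X)] at h0
    rw [ContinuousLinearMap.toLinearMap_comp, LinearMap.toMatrix'_comp, Matrix.det_mul] at hdet
    rw [h0, mul_zero] at hdet
    norm_num at hdet
  · intro C hC
    have himg : H ⁻¹' C = Function.invFun H '' C := by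
      ext x
      constructor
      · intro hx
        exact ⟨H x, hx, Function.leftInverse_invFun hbij.1 x⟩
      · rintro ⟨c, hc, rfl⟩
        rwa [Set.mem_preimage, Function.invFun_eq (hbij.2 c)]
    rw [himg]
    exact hC.image hdiff.continuous

private theorem had_eps {H : (Fin n → ℝ) → (Fin n → ℝ)}
    (hH : ∀ x, AnalyticAt ℝ H x)
    (hdet : ∀ X : Fin n → ℝ,
        (Matrix.of fun j k => fderiv ℝ H X (Pi.single k 1) j).det ≠ 0)
    {M : Set (Fin n → ℝ)} (hM : IsCompact M) :
    ∃ ε > 0, ∀ x ∈ M, ∃ e : OpenPartialHomeomorph (Fin n → ℝ) (Fin n → ℝ),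
      x ∈ e.source ∧ (∀ z ∈ e.source, e z = H z) ∧ ball (H x) ε ⊆ e.target := by
  have hcont : Continuous H := by
    rw [continuous_iff_continuousAt]; exact fun x => (hH x).continuousAt
  choose e hmem heq _ using fun x => had_chart hH hdet x
  have hr : ∀ x : Fin n → ℝ, ∃ r, 0 < r ∧ ball (H x) (2 * r) ⊆ (e x).target := by
    intro x
    have hx : H x ∈ (e x).target := by
      have h2 := (e x).map_source (hmem x)
      rwa [heq x x (hmem x)] at h2
    obtain ⟨r, hr0, hball⟩ := Metric.isOpen_iff.1 (e x).open_target _ hx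
    exact ⟨r / 2, by positivity, by rw [show 2 * (r / 2) = r by ring]; exact hball⟩
  choose r hr0 hrb using hr
  rcases M.eq_empty_or_nonempty with rfl | hne
  · exact ⟨1, one_pos, by simp⟩
  obtain ⟨t, ht⟩ := hM.elim_finite_subcover
    (fun i : M => (e i).source ∩ H ⁻¹' ball (H i) (r i))
    (fun i => ((e i).open_source.inter (isOpen_ball.preimage hcont)))
    (fun x hx => Set.mem_iUnion.2 ⟨⟨x, hx⟩, hmem x, by simpa using hr0 x⟩)
  obtain ⟨x₀, hx₀⟩ := hne
  obtain ⟨i₀, hi₀, -⟩ := Set.mem_iUnion₂.1 (ht hx₀)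
  have htne : t.Nonempty := ⟨i₀, hi₀⟩
  refine ⟨t.inf' htne (fun i => r i), ?_, ?_⟩
  · exact (Finset.lt_inf'_iff htne).2 (fun i _ => hr0 i)
  · intro x hx
    obtain ⟨i, hit, hxs, hxb⟩ := Set.mem_iUnion₂.1 (ht hx)
    refine ⟨e i, hxs, heq i, fun z hz => hrb i ?_⟩
    rw [mem_ball] at *
    have h1 : dist z (H x) < r i :=
      lt_of_lt_of_le hz (Finset.inf'_le _ hit)
    have h2 : dist (H x) (H i) < r i := by simpa using hxb
    calc dist z (H ↑i) ≤ dist z (H x) + dist (H x) (H ↑i) := dist_triangle _ _ _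
      _ < 2 * r i := by linarith

private theorem had_lift {H : (Fin n → ℝ) → (Fin n → ℝ)}
    (hH : ∀ x, AnalyticAt ℝ H x)
    (hdet : ∀ X : Fin n → ℝ,
        (Matrix.of fun j k => fderiv ℝ H X (Pi.single k 1) j).det ≠ 0)
    (hprop : ∀ C : Set (Fin n → ℝ), IsCompact C → IsCompact (H ⁻¹' C))
    (x₀ : Fin n → ℝ) (R : ℝ) (hR0 : 0 < R) (hz₀ : ‖H x₀‖ ≤ R) :
    ∃ Λ : ℝ × (Fin n → ℝ) → (Fin n → ℝ),
      ContinuousOn Λ (Icc (0:ℝ) 1 ×ˢ closedBall 0 R) ∧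
      (∀ y ∈ closedBall (0 : Fin n → ℝ) R, Λ (0, y) = x₀) ∧
      ∀ q ∈ Icc (0:ℝ) 1 ×ˢ closedBall (0 : Fin n → ℝ) R,
        H (Λ q) = H x₀ + q.1 • (q.2 - H x₀) := by
  classical
  set z₀ := H x₀ with hz₀def
  set K : Set (Fin n → ℝ) := closedBall 0 R with hKdef
  set Q : Set (Fin n → ℝ) := closedBall 0 (5 * R) with hQdef
  set p : ℝ × (Fin n → ℝ) → (Fin n → ℝ) := fun q => z₀ + q.1 • (q.2 - z₀) with hpdef
  have hp_cont : Continuous p :=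
    continuous_const.add (continuous_fst.smul (continuous_snd.sub continuous_const))
  have hsep : IsSeparatedMap H := T2Space.isSeparatedMap H
  have hinj : IsLocallyInjective H := had_locInj hH hdet
  have hM : IsCompact (H ⁻¹' Q) := hprop Q (isCompact_closedBall _ _)
  obtain ⟨ε, hε0, hEps⟩ := had_eps hH hdet hM
  have hyz : ∀ y ∈ K, ‖y - z₀‖ ≤ 2 * R := by
    intro y hy
    have h1 : ‖y‖ ≤ R := by simpa [hKdef] using hy
    calc ‖y - z₀‖ ≤ ‖y‖ + ‖z₀‖ := norm_sub_le _ _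
      _ ≤ 2 * R := by linarith
  have hpQ : ∀ s ∈ Icc (0:ℝ) 2, ∀ y ∈ K, p (s, y) ∈ Q := by
    intro s hs y hy
    have h1 : ‖s • (y - z₀)‖ ≤ 2 * (2 * R) := by
      rw [norm_smul, Real.norm_eq_abs, abs_of_nonneg hs.1]
      have := hyz y hy
      nlinarith [hs.2, hs.1]
    simp only [hQdef, mem_closedBall, dist_zero_right]
    calc ‖p (s, y)‖ ≤ ‖z₀‖ + ‖s • (y - z₀)‖ := norm_add_le _ _
      _ ≤ 5 * R := by linarith
  have hdist : ∀ (s t : ℝ) (y y₀ : Fin n → ℝ), y ∈ K → 0 ≤ t → t ≤ 2 →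
      dist (p (s, y)) (p (t, y₀)) ≤ |s - t| * (2 * R) + 2 * dist y y₀ := by
    intro s t y y₀ hy ht0 ht2
    have hrepr : p (s, y) - p (t, y₀) = (s - t) • (y - z₀) + t • (y - y₀) := by
      simp only [hpdef]
      module
    rw [dist_eq_norm, hrepr]
    have h1 : ‖(s - t) • (y - z₀)‖ ≤ |s - t| * (2 * R) := by
      rw [norm_smul, Real.norm_eq_abs]
      exact mul_le_mul_of_nonneg_left (hyz y hy) (abs_nonneg _)
    have h2 : ‖t • (y - y₀)‖ ≤ 2 * dist y y₀ := by
      rw [norm_smul, Real.norm_eq_abs, abs_of_nonneg ht0, dist_eq_norm]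
      nlinarith [norm_nonneg (y - y₀)]
    calc ‖(s - t) • (y - z₀) + t • (y - y₀)‖ ≤ _ + _ := norm_add_le _ _
      _ ≤ _ := add_le_add h1 h2
  set σ : ℝ := ε / (8 * (R + 1)) with hσdef
  have hσ0 : 0 < σ := by positivity
  have hσR : σ * (2 * R) ≤ ε / 4 := by
    rw [hσdef, div_mul_eq_mul_div, div_le_div_iff₀ (by positivity) (by norm_num)]
    nlinarith
  set P : ℝ → Prop := fun t => ∃ Λ : ℝ × (Fin n → ℝ) → (Fin n → ℝ),
    ContinuousOn Λ (Icc 0 t ×ˢ K) ∧ (∀ y ∈ K, Λ (0, y) = x₀) ∧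
    ∀ q ∈ Icc (0:ℝ) t ×ˢ K, H (Λ q) = p q with hPdef
  have hP0 : P 0 := by
    refine ⟨fun _ => x₀, continuousOn_const, fun y _ => rfl, ?_⟩
    rintro ⟨s, y⟩ ⟨hs, hy⟩
    have : s = 0 := le_antisymm hs.2 hs.1
    simp [this, hpdef, hz₀def]
  have hPmono : ∀ t t' : ℝ, 0 ≤ t' → t' ≤ t → P t → P t' := by
    rintro t t' ht'0 ht't ⟨Λ, hc, h0, hl⟩
    have hsub : Icc (0:ℝ) t' ×ˢ K ⊆ Icc (0:ℝ) t ×ˢ K :=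
      Set.prod_mono (Icc_subset_Icc le_rfl ht't) Subset.rfl
    exact ⟨Λ, hc.mono hsub, h0, fun q hq => hl q (hsub hq)⟩
  have step : ∀ t : ℝ, 0 ≤ t → t ≤ 2 → P t → P (min (t + σ) 2) := by
    rintro t ht0 ht2 ⟨Λ, hΛc, hΛ0, hΛH⟩
    set t' := min (t + σ) 2 with ht'def
    have htt' : t ≤ t' := le_min (by linarith) ht2
    have ht'2 : t' ≤ 2 := min_le_right _ _
    have ht'σ : t' ≤ t + σ := min_le_left _ _
    have hq_mem : ∀ y ∈ K, Λ (t, y) ∈ H ⁻¹' Q := by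
      intro y hy
      have h1 : H (Λ (t, y)) = p (t, y) := hΛH (t, y) ⟨⟨ht0, le_rfl⟩, hy⟩
      simp only [Set.mem_preimage, h1]
      exact hpQ t ⟨ht0, ht2⟩ y hy
    have key : ∀ y₀ ∈ K, ∃ (e : OpenPartialHomeomorph (Fin n → ℝ) (Fin n → ℝ)) (δ : ℝ),
        0 < δ ∧ δ ≤ ε / 8 ∧ (∀ y ∈ K, dist y y₀ < δ → Λ (t, y) ∈ e.source) ∧
        (∀ z ∈ e.source, e z = H z) ∧ ball (p (t, y₀)) ε ⊆ e.target := by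
      intro y₀ hy₀
      obtain ⟨e, hes, heH, het⟩ := hEps _ (hq_mem y₀ hy₀)
      have hpt : H (Λ (t, y₀)) = p (t, y₀) := hΛH _ ⟨⟨ht0, le_rfl⟩, hy₀⟩
      rw [hpt] at het
      have hc := hΛc (t, y₀) ⟨⟨ht0, le_rfl⟩, hy₀⟩
      have hmem : Λ ⁻¹' e.source ∈ 𝓝[Icc 0 t ×ˢ K] (t, y₀) :=
        hc.preimage_mem_nhdsWithin (e.open_source.mem_nhds hes)
      obtain ⟨δ', hδ'0, hδ'⟩ := Metric.mem_nhdsWithin_iff.1 hmem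
      refine ⟨e, min δ' (ε / 8), lt_min hδ'0 (by positivity), min_le_right _ _, ?_, heH, het⟩
      intro y hy hdy
      refine hδ' ⟨?_, ⟨⟨ht0, le_rfl⟩, hy⟩⟩
      rw [mem_ball, Prod.dist_eq]
      apply max_lt
      · simpa using hδ'0
      · exact lt_of_lt_of_le hdy (min_le_left _ _)
    choose eP δP hδ0 hδε hδin heH het using key
    have htarget1 : ∀ y₀ (hy₀ : y₀ ∈ K), ∀ y ∈ K, dist y y₀ < δP y₀ hy₀ →
        ∀ s ∈ Icc t t', p (s, y) ∈ (eP y₀ hy₀).target := by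
      intro y₀ hy₀ y hy hdy s hs
      apply het y₀ hy₀
      rw [mem_ball]
      have h1 := hdist s t y y₀ hy ht0 ht2
      have h2 : |s - t| ≤ σ := by
        rw [abs_of_nonneg (by linarith [hs.1] : (0:ℝ) ≤ s - t)]
        linarith [hs.2, ht'σ]
      have h3 : |s - t| * (2 * R) ≤ σ * (2 * R) :=
        mul_le_mul_of_nonneg_right h2 (by linarith)
      have h4 : dist y y₀ < ε / 8 := lt_of_lt_of_le hdy (hδε y₀ hy₀)
      calc dist (p (s, y)) (p (t, y₀)) ≤ |s - t| * (2 * R) + 2 * dist y y₀ := h1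
        _ < ε := by nlinarith [hσR]
    have hsymm_t : ∀ y₀ (hy₀ : y₀ ∈ K), ∀ y ∈ K, dist y y₀ < δP y₀ hy₀ →
        (eP y₀ hy₀).symm (p (t, y)) = Λ (t, y) := by
      intro y₀ hy₀ y hy hdy
      have h1 : Λ (t, y) ∈ (eP y₀ hy₀).source := hδin y₀ hy₀ y hy hdy
      have h2 : p (t, y) ∈ (eP y₀ hy₀).target :=
        htarget1 y₀ hy₀ y hy hdy t ⟨le_rfl, htt'⟩
      refine (((eP y₀ hy₀).eq_symm_apply h1 h2).2 ?_).symm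
      rw [heH y₀ hy₀ _ h1]
      exact hΛH (t, y) ⟨⟨ht0, le_rfl⟩, hy⟩
    set Λ' : ℝ × (Fin n → ℝ) → (Fin n → ℝ) := fun q =>
      if q.1 ≤ t then Λ q else if h : q.2 ∈ K then (eP q.2 h).symm (p q) else x₀
      with hΛ'def
    have hslice_cont : ∀ y₀ (hy₀ : y₀ ∈ K), ∀ y ∈ K, dist y y₀ < δP y₀ hy₀ →
        ContinuousOn (fun s => (eP y₀ hy₀).symm (p (s, y))) (Icc t t') := by
      intro y₀ hy₀ y hy hdy
      apply ((eP y₀ hy₀).continuousOn_symm).comp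
        ((hp_cont.comp (continuous_id.prodMk continuous_const)).continuousOn)
      intro s hs
      exact htarget1 y₀ hy₀ y hy hdy s hs
    have hlift_slice : ∀ y₀ (hy₀ : y₀ ∈ K), ∀ y ∈ K, dist y y₀ < δP y₀ hy₀ →
        ∀ s ∈ Icc t t', H ((eP y₀ hy₀).symm (p (s, y))) = p (s, y) := by
      intro y₀ hy₀ y hy hdy s hs
      have h2 : p (s, y) ∈ (eP y₀ hy₀).target := htarget1 y₀ hy₀ y hy hdy s hs
      rw [← heH y₀ hy₀ _ ((eP y₀ hy₀).map_target h2)]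
      exact (eP y₀ hy₀).right_inv h2
    have compat : ∀ y₀ (hy₀ : y₀ ∈ K), ∀ y ∈ K, dist y y₀ < δP y₀ hy₀ →
        ∀ s ∈ Icc t t', Λ' (s, y) = (eP y₀ hy₀).symm (p (s, y)) := by
      intro y₀ hy₀ y hy hdy
      have hdyy : dist y y < δP y hy := by simpa using hδ0 y hy
      have huniq : Set.EqOn (fun s => (eP y hy).symm (p (s, y)))
          (fun s => (eP y₀ hy₀).symm (p (s, y))) (Icc t t') := by
        apply hsep.eqOn_of_comp_eqOn hinj isPreconnected_Icc
          (hslice_cont y hy y hy hdyy) (hslice_cont y₀ hy₀ y hy hdy)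
          (fun s hs => ?_) (⟨le_rfl, htt'⟩ : t ∈ Icc t t')
          (by rw [hsymm_t y hy y hy hdyy, hsymm_t y₀ hy₀ y hy hdy])
        show H _ = H _
        rw [hlift_slice y hy y hy hdyy s hs, hlift_slice y₀ hy₀ y hy hdy s hs]
      intro s hs
      rcases eq_or_lt_of_le hs.1 with rfl | hst
      · have h1 : Λ' (t, y) = Λ (t, y) := by
          simp only [hΛ'def]
          rw [if_pos le_rfl]
        rw [h1, ← hsymm_t y₀ hy₀ y hy hdy]
      · have h1 : Λ' (s, y) = (eP y hy).symm (p (s, y)) := by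
          simp only [hΛ'def]
          rw [if_neg (not_le.2 hst), dif_pos hy]
        rw [h1]
        exact huniq hs
    refine hPmono _ _ (le_min (by linarith) (by norm_num) : (0:ℝ) ≤ t')
      le_rfl ⟨Λ', ?_, ?_, ?_⟩
    · -- continuity
      rintro ⟨s, y⟩ ⟨hs, hy⟩
      rcases lt_or_ge s t with hlt | hge
      · have hO : {q : ℝ × (Fin n → ℝ) | q.1 < t} ∈ 𝓝 (s, y) :=
          (isOpen_lt continuous_fst continuous_const).mem_nhds hlt
        rw [← continuousWithinAt_inter hO]
        have hsub : (Icc (0:ℝ) t' ×ˢ K) ∩ {q | q.1 < t} ⊆ Icc (0:ℝ) t ×ˢ K := by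
          rintro ⟨a, b⟩ ⟨⟨ha, hb⟩, hlt'⟩
          exact ⟨⟨ha.1, le_of_lt hlt'⟩, hb⟩
        refine ((hΛc (s, y) ⟨⟨hs.1, le_of_lt hlt⟩, hy⟩).mono hsub).congr ?_ ?_
        · rintro ⟨a, b⟩ ⟨-, hlt'⟩
          simp only [hΛ'def]
          rw [if_pos (le_of_lt (show a < t from hlt'))]
        · simp only [hΛ'def]
          rw [if_pos (le_of_lt hlt)]
      · set δ := δP y hy with hδdef
        set A := (Icc (0:ℝ) t' ×ˢ K) ∩ {q : ℝ × (Fin n → ℝ) | q.1 ≤ t} with hAdef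
        set B := ((Icc (0:ℝ) t' ×ˢ K) ∩ (univ ×ˢ ball y δ)) ∩
          {q : ℝ × (Fin n → ℝ) | t ≤ q.1} with hBdef
        have hA : ContinuousWithinAt Λ' A (s, y) := by
          rcases eq_or_lt_of_le hge with rfl | hgt
          · have hsub : A ⊆ Icc (0:ℝ) t ×ˢ K := by
              rintro ⟨a, b⟩ ⟨⟨ha, hb⟩, hle⟩
              exact ⟨⟨ha.1, hle⟩, hb⟩
            refine ((hΛc (t, y) ⟨⟨hs.1, le_rfl⟩, hy⟩).mono hsub).congr ?_ ?_
            · rintro ⟨a, b⟩ ⟨-, hle⟩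
              simp only [hΛ'def]
              rw [if_pos (show a ≤ t from hle)]
            · simp only [hΛ'def]
              rw [if_pos le_rfl]
          · apply continuousWithinAt_of_notMem_closure
            intro hcl
            have hclosed : IsClosed {q : ℝ × (Fin n → ℝ) | q.1 ≤ t} :=
              isClosed_le continuous_fst continuous_const
            have : (s, y) ∈ {q : ℝ × (Fin n → ℝ) | q.1 ≤ t} :=
              hclosed.closure_subset (closure_mono inter_subset_right hcl)
            exact absurd this (not_le.2 hgt)
        have hmemB : (s, y) ∈ B :=
          ⟨⟨⟨hs, hy⟩, ⟨trivial, mem_ball_self (hδ0 y hy)⟩⟩, hge⟩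
        have hB : ContinuousWithinAt Λ' B (s, y) := by
          have hgc : ContinuousOn (fun q => (eP y hy).symm (p q)) B := by
            apply ((eP y hy).continuousOn_symm).comp hp_cont.continuousOn
            rintro ⟨a, b⟩ ⟨⟨⟨ha, hb⟩, ⟨-, hbb⟩⟩, hta⟩
            exact htarget1 y hy b hb (mem_ball.1 hbb) a ⟨hta, ha.2⟩
          have hEq : Set.EqOn Λ' (fun q => (eP y hy).symm (p q)) B := by
            rintro ⟨a, b⟩ ⟨⟨⟨ha, hb⟩, ⟨-, hbb⟩⟩, hta⟩
            exact compat y hy b hb (mem_ball.1 hbb) a ⟨hta, ha.2⟩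
          exact ((hgc (s, y) hmemB).congr hEq (hEq hmemB))
        have hN : ((univ : Set ℝ) ×ˢ ball y δ) ∈ 𝓝 (s, y) :=
          prod_mem_nhds Filter.univ_mem (ball_mem_nhds _ (hδ0 y hy))
        rw [← continuousWithinAt_inter hN]
        refine (hA.union hB).mono ?_
        rintro ⟨a, b⟩ ⟨hD, hNb⟩
        rcases le_or_gt a t with h | h
        · exact Or.inl ⟨hD, h⟩
        · exact Or.inr ⟨⟨hD, hNb⟩, le_of_lt h⟩
    · -- initial condition
      intro y hy
      simp only [hΛ'def]
      rw [if_pos ht0]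
      exact hΛ0 y hy
    · -- lift property
      rintro ⟨s, y⟩ ⟨hs, hy⟩
      rcases le_or_gt s t with h | h
      · have h1 : Λ' (s, y) = Λ (s, y) := by simp only [hΛ'def]; rw [if_pos h]
        rw [h1]
        exact hΛH (s, y) ⟨⟨hs.1, h⟩, hy⟩
      · have h1 : Λ' (s, y) = (eP y hy).symm (p (s, y)) := by
          simp only [hΛ'def]; rw [if_neg (not_le.2 h), dif_pos hy]
        rw [h1]
        have hdyy : dist y y < δP y hy := by simpa using hδ0 y hy
        exact hlift_slice y hy y hy hdyy s ⟨le_of_lt h, hs.2⟩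
  -- induction
  have hPind : ∀ k : ℕ, P (min ((k : ℝ) * σ) 2) := by
    intro k
    induction k with
    | zero =>
      have h : min ((0:ℕ) * σ : ℝ) 2 = 0 := by push_cast; rw [zero_mul]; exact min_eq_left (by norm_num)
      rw [show ((0:ℕ) : ℝ) = 0 by norm_num, zero_mul, min_eq_left (by norm_num : (0:ℝ) ≤ 2)]
      exact hP0
    | succ k ih =>
      have h1 : 0 ≤ min ((k : ℝ) * σ) 2 := le_min (by positivity) (by norm_num)
      have h2 : min ((k : ℝ) * σ) 2 ≤ 2 := min_le_right _ _
      have h3 := step _ h1 h2 ih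
      have heq : min (min ((k : ℝ) * σ) 2 + σ) 2 = min (((k + 1 : ℕ) : ℝ) * σ) 2 := by
        push_cast
        rcases le_total ((k : ℝ) * σ) 2 with h | h
        · rw [min_eq_left h]; ring_nf
        · rw [min_eq_right h, min_eq_right (by linarith [hσ0.le]),
            min_eq_right (by nlinarith [hσ0.le])]
      rwa [heq] at h3
  obtain ⟨k, hk⟩ : ∃ k : ℕ, 2 ≤ (k : ℝ) * σ := by
    obtain ⟨k, hk⟩ := exists_nat_ge (2 / σ)
    exact ⟨k, by rwa [div_le_iff₀ hσ0] at hk⟩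
  have hP2 : P 2 := by
    have := hPind k
    rwa [min_eq_right hk] at this
  obtain ⟨Λ, hc, h0, hl⟩ := hPmono 2 1 (by norm_num) (by norm_num) hP2
  exact ⟨Λ, hc, h0, fun q hq => hl q hq⟩


private theorem had_section {H : (Fin n → ℝ) → (Fin n → ℝ)}
    (hH : ∀ x, AnalyticAt ℝ H x)
    (hdet : ∀ X : Fin n → ℝ,
        (Matrix.of fun j k => fderiv ℝ H X (Pi.single k 1) j).det ≠ 0)
    (hprop : ∀ C : Set (Fin n → ℝ), IsCompact C → IsCompact (H ⁻¹' C)) :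
    ∃ g : (Fin n → ℝ) → (Fin n → ℝ), Continuous g ∧ ∀ y, H (g y) = y := by
  classical
  set x₀ : Fin n → ℝ := 0 with hx₀def
  set c : ℝ := ‖H x₀‖ with hcdef
  have hsep : IsSeparatedMap H := T2Space.isSeparatedMap H
  have hinj : IsLocallyInjective H := had_locInj hH hdet
  have hex : ∀ R : ℝ, ∃ Λ : ℝ × (Fin n → ℝ) → (Fin n → ℝ),
      (0 < R ∧ c ≤ R) →
      (ContinuousOn Λ (Icc (0:ℝ) 1 ×ˢ closedBall 0 R) ∧
      (∀ y ∈ closedBall (0 : Fin n → ℝ) R, Λ (0, y) = x₀) ∧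
      ∀ q ∈ Icc (0:ℝ) 1 ×ˢ closedBall (0 : Fin n → ℝ) R,
        H (Λ q) = H x₀ + q.1 • (q.2 - H x₀)) := by
    intro R
    by_cases h : 0 < R ∧ c ≤ R
    · obtain ⟨Λ, h1, h2, h3⟩ := had_lift hH hdet hprop x₀ R h.1 h.2
      exact ⟨Λ, fun _ => ⟨h1, h2, h3⟩⟩
    · exact ⟨fun _ => x₀, fun h' => absurd h' h⟩
  choose Λf hΛf using hex
  have hslice : ∀ R : ℝ, (0 < R ∧ c ≤ R) → ∀ y ∈ closedBall (0 : Fin n → ℝ) R,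
      ContinuousOn (fun s => Λf R (s, y)) (Icc (0:ℝ) 1) ∧
      (Λf R (0, y) = x₀) ∧ ∀ s ∈ Icc (0:ℝ) 1, H (Λf R (s, y)) = H x₀ + s • (y - H x₀) := by
    intro R hR y hy
    obtain ⟨h1, h2, h3⟩ := hΛf R hR
    refine ⟨?_, h2 y hy, fun s hs => h3 (s, y) ⟨hs, hy⟩⟩
    exact h1.comp (continuous_id.prodMk continuous_const).continuousOn
      (fun s hs => ⟨hs, hy⟩)
  have hcons : ∀ R R' : ℝ, (0 < R ∧ c ≤ R) → (0 < R' ∧ c ≤ R') →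
      ∀ y : Fin n → ℝ, ‖y‖ ≤ R → ‖y‖ ≤ R' → Λf R (1, y) = Λf R' (1, y) := by
    intro R R' hR hR' y hyR hyR'
    have hy : y ∈ closedBall (0 : Fin n → ℝ) R := by simpa using hyR
    have hy' : y ∈ closedBall (0 : Fin n → ℝ) R' := by simpa using hyR'
    obtain ⟨hc1, h01, hl1⟩ := hslice R hR y hy
    obtain ⟨hc2, h02, hl2⟩ := hslice R' hR' y hy'
    have := hsep.eqOn_of_comp_eqOn hinj isPreconnected_Icc hc1 hc2
      (fun s hs => by show H _ = H _; rw [hl1 s hs, hl2 s hs])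
      (⟨le_rfl, zero_le_one⟩ : (0:ℝ) ∈ Icc (0:ℝ) 1) (by rw [h01, h02])
    exact this ⟨zero_le_one, le_rfl⟩
  have hc0 : (0:ℝ) ≤ c := norm_nonneg _
  have hcond : ∀ y : Fin n → ℝ, (0 < ‖y‖ + c + 1 ∧ c ≤ ‖y‖ + c + 1) := by
    intro y
    constructor <;> nlinarith [norm_nonneg y]
  set g : (Fin n → ℝ) → (Fin n → ℝ) := fun y => Λf (‖y‖ + c + 1) (1, y) with hgdef
  have hgself : ∀ (y : Fin n → ℝ) (R : ℝ), (0 < R ∧ c ≤ R) → ‖y‖ ≤ R →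
      g y = Λf R (1, y) := by
    intro y R hR hyR
    exact hcons _ R (hcond y) hR y (by nlinarith [norm_nonneg y, (hcond y).1]) hyR
  refine ⟨g, ?_, ?_⟩
  · rw [continuous_iff_continuousAt]
    intro y₀
    set R₀ : ℝ := ‖y₀‖ + c + 2 with hR₀def
    have hR₀ : 0 < R₀ ∧ c ≤ R₀ := by
      constructor <;> nlinarith [norm_nonneg y₀, hc0]
    have heg : ∀ y ∈ ball y₀ 1, g y = Λf R₀ (1, y) := by
      intro y hy
      apply hgself y R₀ hR₀
      have : ‖y - y₀‖ < 1 := by simpa [dist_eq_norm] using hy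
      calc ‖y‖ ≤ ‖y₀‖ + ‖y - y₀‖ := norm_le_norm_add_norm_sub' _ _
        _ ≤ R₀ := by nlinarith [hc0]
    have hΛcont : ContinuousAt (fun y => Λf R₀ (1, y)) y₀ := by
      obtain ⟨h1, -, -⟩ := hΛf R₀ hR₀
      have hmaps : MapsTo (fun y : Fin n → ℝ => ((1:ℝ), y)) (closedBall 0 R₀)
          (Icc (0:ℝ) 1 ×ˢ closedBall (0 : Fin n → ℝ) R₀) :=
        fun y hy => ⟨⟨zero_le_one, le_rfl⟩, hy⟩
      have h2 : ContinuousOn (fun y => Λf R₀ (1, y)) (closedBall 0 R₀) :=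
        h1.comp (continuous_const.prodMk continuous_id).continuousOn hmaps
      have hmem : closedBall (0 : Fin n → ℝ) R₀ ∈ 𝓝 y₀ := by
        apply Metric.closedBall_mem_nhds_of_mem
        simp only [mem_ball, dist_zero_right]
        nlinarith [hc0]
      exact (h2 y₀ (mem_of_mem_nhds hmem)).continuousAt hmem
    apply ContinuousAt.congr hΛcont
    filter_upwards [ball_mem_nhds y₀ one_pos] with y hy
    exact (heg y hy).symm
  · intro y
    have h1 : g y = Λf (‖y‖ + c + 1) (1, y) := rfl
    have hy : y ∈ closedBall (0 : Fin n → ℝ) (‖y‖ + c + 1) := by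
      simp only [mem_closedBall, dist_zero_right]
      nlinarith [hc0, norm_nonneg y]
    obtain ⟨-, -, hl⟩ := hslice _ (hcond y) y hy
    have := hl 1 ⟨zero_le_one, le_rfl⟩
    rw [h1, this]
    simp

theorem hadamard_backward {H : (Fin n → ℝ) → (Fin n → ℝ)}
    (hH : ∀ x, AnalyticAt ℝ H x)
    (hdet : ∀ X : Fin n → ℝ,
        (Matrix.of fun j k => fderiv ℝ H X (Pi.single k 1) j).det ≠ 0)
    (hprop : ∀ C : Set (Fin n → ℝ), IsCompact C → IsCompact (H ⁻¹' C)) :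
    Function.Bijective H ∧ Differentiable ℝ (Function.invFun H) := by
  obtain ⟨g, hgc, hgH⟩ := had_section hH hdet hprop
  have hcont : Continuous H := by
    rw [continuous_iff_continuousAt]; exact fun x => (hH x).continuousAt
  have hsurj : Function.Surjective H := fun y => ⟨g y, hgH y⟩
  have hS : {x : Fin n → ℝ | g (H x) = x} = univ := by
    apply IsClopen.eq_univ
    · constructor
      · exact isClosed_eq (hgc.comp hcont) continuous_id
      · rw [isOpen_iff_forall_mem_open]
        intro x hx
        obtain ⟨e, hes, heq, -⟩ := had_chart hH hdet x
        refine ⟨e.source ∩ (fun x' => g (H x')) ⁻¹' e.source, ?_, ?_, ?_⟩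
        · rintro x' ⟨hx's, hx'p⟩
          show g (H x') = x'
          apply e.injOn hx'p hx's
          rw [heq _ hx'p, heq _ hx's]
          exact hgH (H x')
        · exact e.open_source.inter (e.open_source.preimage (hgc.comp hcont))
        · refine ⟨hes, ?_⟩
          show g (H x) ∈ e.source
          rw [show g (H x) = x from hx]
          exact hes
    · exact ⟨g (H 0), by show g (H (g (H 0))) = g (H 0); rw [hgH (H 0)]⟩
  have hfix : ∀ x, g (H x) = x := fun x => (Set.eq_univ_iff_forall.1 hS x : _)
  have hinj : Function.Injective H := fun a b hab => by
    rw [← hfix a, ← hfix b, hab]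
  refine ⟨⟨hinj, hsurj⟩, ?_⟩
  intro z
  set a := Function.invFun H z with hadef
  have hHa : H a = z := Function.invFun_eq (hsurj z)
  obtain ⟨e, hes, heq, hdsymm⟩ := had_chart hH hdet a
  have htgt : H a ∈ e.target := by rw [← heq a hes]; exact e.map_source hes
  have hev : Function.invFun H =ᶠ[𝓝 z] e.symm := by
    rw [← hHa]
    filter_upwards [e.open_target.mem_nhds htgt] with w hw
    have h1 : H (e.symm w) = w := by
      rw [← heq _ (e.map_target hw)]; exact e.right_inv hw
    have h2 : H (Function.invFun H w) = w := Function.invFun_eq (hsurj w)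
    exact hinj (h2.trans h1.symm)
  have hd2 : DifferentiableAt ℝ e.symm z := hHa ▸ hdsymm
  exact hev.differentiableAt_iff.2 hd2

/-- **Hadamard's Diffeomorphism Theorem.** An analytic map `H : ℝⁿ → ℝⁿ` is a diffeomorphism
(bijective with differentiable inverse) iff its Jacobian determinant is nonzero everywhere
and `H` is proper (preimages of compact sets are compact). -/
theorem hadamard_diffeomorphism (n : ℕ) (H : (Fin n → ℝ) → (Fin n → ℝ))
    (hH : ∀ x, AnalyticAt ℝ H x) :
    (Function.Bijective H ∧ Differentiable ℝ (Function.invFun H)) ↔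
    ((∀ X : Fin n → ℝ,
        (Matrix.of fun j k => fderiv ℝ H X (Pi.single k 1) j).det ≠ 0) ∧
      ∀ C : Set (Fin n → ℝ), IsCompact C → IsCompact (H ⁻¹' C)) := by
  constructor
  · rintro ⟨hbij, hdiff⟩
    exact hadamard_forward hH hbij hdiff
  · rintro ⟨hdet, hprop⟩
    exact hadamard_backward hH hdet hprop
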